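/- Let G be a finite group, T an abelian subgroup of G, and θ : T → ℂˣ a group homomorphism. Let P = {C_G(s) : s ∈ T} be the (finite) poset of centralizers of elements of T, partially ordered by inclusion, and let μ denote its Möbius function. For a subgroup 𝔗' ∈ P define δ(θ, 𝔗') = |T ∩ C_G(𝔗')| if θ restricted to the subgroup T ∩ C_G(𝔗') is trivial, and δ(θ, 𝔗') = 0 otherwise. Then for every 𝔗 ∈ P one has ∑_{s ∈ T, C_G(s) = 𝔗} θ(s) = ∑_{𝔗' ∈ P, 𝔗 ⊆ 𝔗'} μ(𝔗, 𝔗') · δ(θ, 𝔗'). -/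
import Mathlib


open scoped Classical

private lemma charsum {H : Type*} [Group H] [Fintype H] (χ : H →* ℂˣ)
    (h : ¬ ∀ x : H, χ x = 1) : ∑ x : H, ((χ x : ℂˣ) : ℂ) = 0 := by
  push_neg at h
  obtain ⟨a, ha⟩ := h
  have key : ∑ x : H, ((χ (a * x) : ℂˣ) : ℂ) = ∑ x : H, ((χ x : ℂˣ) : ℂ) :=
    Fintype.sum_bijective (fun x => a * x) (Group.mulLeft_bijective a) _ _ (fun x => rfl)
  simp only [map_mul, Units.val_mul, ← Finset.mul_sum] at key
  have ha' : ((χ a : ℂˣ) : ℂ) ≠ 1 := fun h' => ha (Units.ext h')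
  have h0 := sub_eq_zero.mpr key
  rw [← sub_one_mul] at h0
  rcases mul_eq_zero.mp h0 with h1 | h2
  · exact absurd (sub_eq_zero.mp h1) ha'
  · exact h2

private lemma memcent {G : Type*} [Group G] (T : Subgroup G) (K : Subgroup G) (t : T) :
    (t : G) ∈ Subgroup.centralizer (K : Set G) ↔ K ≤ Subgroup.centralizer {(t : G)} := by
  constructor
  · intro h k hk
    rw [Subgroup.mem_centralizer_iff]
    rintro x rfl
    exact (h k hk).symm
  · intro h
    intro k hk
    have := h hk
    rw [Subgroup.mem_centralizer_iff] at this
    exact (this t (Set.mem_singleton _)).symm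

private lemma deltalem {G : Type*} [Group G] [Fintype G]
    (T : Subgroup G) (θ : T →* ℂˣ) (δ : Subgroup G → ℂ)
    (hδ₁ : ∀ K : Subgroup G,
      (∀ t : T, (t : G) ∈ Subgroup.centralizer (K : Set G) → θ t = 1) →
        δ K = (Nat.card {t : T // (t : G) ∈ Subgroup.centralizer (K : Set G)} : ℂ))
    (hδ₂ : ∀ K : Subgroup G,
      ¬ (∀ t : T, (t : G) ∈ Subgroup.centralizer (K : Set G) → θ t = 1) → δ K = 0)
    (K : Subgroup G) :
    δ K = ∑ t ∈ Finset.univ.filter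
        (fun t : T => K ≤ Subgroup.centralizer {(t : G)}), ((θ t : ℂˣ) : ℂ) := by
  have hfilt : Finset.univ.filter (fun t : T => K ≤ Subgroup.centralizer {(t : G)})
      = Finset.univ.filter (fun t : T => (t : G) ∈ Subgroup.centralizer (K : Set G)) := by
    apply Finset.filter_congr
    intro t _
    simp [memcent T K t]
  rw [hfilt]
  by_cases htriv : ∀ t : T, (t : G) ∈ Subgroup.centralizer (K : Set G) → θ t = 1
  · rw [hδ₁ K htriv]
    have : ∀ t ∈ Finset.univ.filter
        (fun t : T => (t : G) ∈ Subgroup.centralizer (K : Set G)),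
        ((θ t : ℂˣ) : ℂ) = 1 := by
      intro t ht
      rw [htriv t (Finset.mem_filter.mp ht).2]
      rfl
    rw [Finset.sum_congr rfl this, Finset.sum_const, nsmul_eq_mul, mul_one,
      Nat.card_eq_fintype_card, Fintype.card_subtype]
  · rw [hδ₂ K htriv]
    set H : Subgroup T := Subgroup.comap T.subtype (Subgroup.centralizer (K : Set G)) with hH
    have hmem : ∀ t : T, t ∈ H ↔ (t : G) ∈ Subgroup.centralizer (K : Set G) := by
      intro t; rw [hH, Subgroup.mem_comap]; rfl
    rw [show (Finset.univ.filter
        (fun t : T => (t : G) ∈ Subgroup.centralizer (K : Set G)))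
        = Finset.univ.filter (fun t : T => t ∈ H) by
      exact Finset.filter_congr (fun t _ => by simp [hmem t])]
    symm
    rw [Finset.sum_subtype (p := fun t : T => t ∈ H)
      (Finset.univ.filter (fun t : T => t ∈ H))
      (fun t => by simp) (fun t : T => ((θ t : ℂˣ) : ℂ))]
    have hnt : ¬ ∀ x : H, (θ.comp H.subtype) x = 1 := by
      push_neg at htriv ⊢
      obtain ⟨t, ht1, ht2⟩ := htriv
      exact ⟨⟨t, (hmem t).mpr ht1⟩, ht2⟩
    exact charsum (θ.comp H.subtype) hnt


/-- Let `G` be a finite group, `T` an abelian subgroup, and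
`θ : T → ℂˣ` a homomorphism. Let `P = {C_G(s) : s ∈ T}` be the poset of centralizers of
elements of `T`, ordered by inclusion, with Möbius function `μ` (characterized by
`μ a a = 1` and `∑_{a ≤ c ≤ b} μ a c = 0` for `a < b`). For `𝔗' ∈ P` let
`δ 𝔗' = |T ∩ C_G(𝔗')|` if `θ` is trivial on `T ∩ C_G(𝔗')`, and `0` otherwise. Then for
every `𝔗 ∈ P`, `∑_{s ∈ T, C_G(s) = 𝔗} θ(s) = ∑_{𝔗' ∈ P, 𝔗 ⊆ 𝔗'} μ(𝔗,𝔗') · δ 𝔗'`. -/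
theorem stmt2 {G : Type*} [Group G] [Fintype G]
    (T : Subgroup G) (hT : ∀ a ∈ T, ∀ b ∈ T, a * b = b * a)
    (θ : T →* ℂˣ)
    (P : Finset (Subgroup G))
    (hP : ∀ K : Subgroup G, K ∈ P ↔ ∃ s ∈ T, Subgroup.centralizer {s} = K)
    (μ : Subgroup G → Subgroup G → ℂ)
    (hμdiag : ∀ a ∈ P, μ a a = 1)
    (hμsum : ∀ a ∈ P, ∀ b ∈ P, a < b →
      ∑ c ∈ P.filter (fun c => a ≤ c ∧ c ≤ b), μ a c = 0)
    (δ : Subgroup G → ℂ)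
    (hδ₁ : ∀ K : Subgroup G,
      (∀ t : T, (t : G) ∈ Subgroup.centralizer (K : Set G) → θ t = 1) →
        δ K = (Nat.card {t : T // (t : G) ∈ Subgroup.centralizer (K : Set G)} : ℂ))
    (hδ₂ : ∀ K : Subgroup G,
      ¬ (∀ t : T, (t : G) ∈ Subgroup.centralizer (K : Set G) → θ t = 1) → δ K = 0)
    (𝔗 : Subgroup G) (h𝔗 : 𝔗 ∈ P) :
    ∑ t ∈ Finset.univ.filter (fun t : T => Subgroup.centralizer {(t : G)} = 𝔗),
        ((θ t : ℂˣ) : ℂ)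
      = ∑ K ∈ P.filter (fun K => 𝔗 ≤ K), μ 𝔗 K * δ K := by
  have hrhs : ∑ K ∈ P.filter (fun K => 𝔗 ≤ K), μ 𝔗 K * δ K
      = ∑ t : T, (∑ K ∈ P.filter
          (fun K => 𝔗 ≤ K ∧ K ≤ Subgroup.centralizer {(t : G)}), μ 𝔗 K)
          * ((θ t : ℂˣ) : ℂ) := by
    calc ∑ K ∈ P.filter (fun K => 𝔗 ≤ K), μ 𝔗 K * δ K
        = ∑ K ∈ P.filter (fun K => 𝔗 ≤ K), ∑ t : T,
            (if K ≤ Subgroup.centralizer {(t : G)} then μ 𝔗 K * ((θ t : ℂˣ) : ℂ) else 0) := by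
          refine Finset.sum_congr rfl (fun K _ => ?_)
          rw [deltalem T θ δ hδ₁ hδ₂ K, Finset.mul_sum, Finset.sum_filter]
      _ = ∑ t : T, ∑ K ∈ P.filter (fun K => 𝔗 ≤ K),
            (if K ≤ Subgroup.centralizer {(t : G)} then μ 𝔗 K * ((θ t : ℂˣ) : ℂ) else 0) :=
          Finset.sum_comm
      _ = ∑ t : T, (∑ K ∈ P.filter
            (fun K => 𝔗 ≤ K ∧ K ≤ Subgroup.centralizer {(t : G)}), μ 𝔗 K)
            * ((θ t : ℂˣ) : ℂ) := by
          refine Finset.sum_congr rfl (fun t _ => ?_)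
          rw [Finset.sum_mul, ← Finset.sum_filter, Finset.filter_filter]
  rw [hrhs]
  have hcoef : ∀ t : T, (∑ K ∈ P.filter
      (fun K => 𝔗 ≤ K ∧ K ≤ Subgroup.centralizer {(t : G)}), μ 𝔗 K)
      = if Subgroup.centralizer {(t : G)} = 𝔗 then 1 else 0 := by
    intro t
    by_cases hEq : Subgroup.centralizer {(t : G)} = 𝔗
    · rw [if_pos hEq]
      have hfil : P.filter (fun K => 𝔗 ≤ K ∧ K ≤ Subgroup.centralizer {(t : G)}) = {𝔗} := by
        ext K
        simp only [Finset.mem_filter, Finset.mem_singleton, hEq]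
        constructor
        · rintro ⟨_, h1, h2⟩; exact le_antisymm h2 h1
        · rintro rfl; exact ⟨h𝔗, le_refl _, le_refl _⟩
      rw [hfil, Finset.sum_singleton, hμdiag 𝔗 h𝔗]
    · rw [if_neg hEq]
      by_cases hle : 𝔗 ≤ Subgroup.centralizer {(t : G)}
      · have hCt : Subgroup.centralizer {(t : G)} ∈ P := (hP _).mpr ⟨t, t.2, rfl⟩
        exact hμsum 𝔗 h𝔗 _ hCt (lt_of_le_of_ne hle (fun h => hEq h.symm))
      · rw [Finset.filter_false_of_mem, Finset.sum_empty]
        exact fun K _ h => hle (le_trans h.1 h.2)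
  rw [Finset.sum_filter]
  refine Finset.sum_congr rfl (fun t _ => ?_)
  rw [hcoef t]
  split <;> simp
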